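/- With Δ_n ∈ H_n ι_0 ⊗_{H_{n−1}[y]} ι_1 H_n as above and s_i = τ_i(x_i − x_{i+1}) − 1 ∈ H_n, one has s_{n−1} s_{n−2} ⋯ s_1 · (x_n − y)(x_{n−1} − y) ⋯ (x_2 − y) · Δ_n = 1 ⊗ 1 in H_n ι_0 ⊗_{H_{n−1}[y]} ι_1 H_n. -/

import Mathlib

open scoped TensorProduct

namespace NilHecke

variable (k : Type) [Field k]

/-- Relations of the nil affine Hecke algebra `H n` (0-based indices: generators
`x_0,…,x_{n-1}` and `τ_0,…,τ_{n-2}`; out-of-range generators are killed). -/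
inductive Rel (n : ℕ) : FreeAlgebra k (ℕ ⊕ ℕ) → FreeAlgebra k (ℕ ⊕ ℕ) → Prop
  | xkill (i : ℕ) (h : n ≤ i) : Rel n (FreeAlgebra.ι k (.inl i)) 0
  | tkill (i : ℕ) (h : n ≤ i + 1) : Rel n (FreeAlgebra.ι k (.inr i)) 0
  | tsq (i : ℕ) : Rel n (FreeAlgebra.ι k (.inr i) * FreeAlgebra.ι k (.inr i)) 0
  | braid (i : ℕ) :
      Rel n (FreeAlgebra.ι k (.inr i) * FreeAlgebra.ι k (.inr (i+1)) * FreeAlgebra.ι k (.inr i))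
        (FreeAlgebra.ι k (.inr (i+1)) * FreeAlgebra.ι k (.inr i) * FreeAlgebra.ι k (.inr (i+1)))
  | tcomm (i j : ℕ) (h : i + 1 < j) :
      Rel n (FreeAlgebra.ι k (.inr i) * FreeAlgebra.ι k (.inr j))
        (FreeAlgebra.ι k (.inr j) * FreeAlgebra.ι k (.inr i))
  | xcomm (i j : ℕ) :
      Rel n (FreeAlgebra.ι k (.inl i) * FreeAlgebra.ι k (.inl j))
        (FreeAlgebra.ι k (.inl j) * FreeAlgebra.ι k (.inl i))
  | txcomm (i j : ℕ) (h1 : j ≠ i) (h2 : j ≠ i + 1) :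
      Rel n (FreeAlgebra.ι k (.inr i) * FreeAlgebra.ι k (.inl j))
        (FreeAlgebra.ι k (.inl j) * FreeAlgebra.ι k (.inr i))
  | tx (i : ℕ) (h : i + 1 < n) :
      Rel n (FreeAlgebra.ι k (.inr i) * FreeAlgebra.ι k (.inl i)
          - FreeAlgebra.ι k (.inl (i+1)) * FreeAlgebra.ι k (.inr i)) 1
  | xt (i : ℕ) (h : i + 1 < n) :
      Rel n (FreeAlgebra.ι k (.inl i) * FreeAlgebra.ι k (.inr i)
          - FreeAlgebra.ι k (.inr i) * FreeAlgebra.ι k (.inl (i+1))) 1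

/-- The nil affine Hecke algebra on `n` strands over `k`. -/
def H (n : ℕ) : Type := RingQuot (Rel k n)

instance (n : ℕ) : Ring (H k n) := inferInstanceAs (Ring (RingQuot (Rel k n)))

instance (n : ℕ) : Algebra k (H k n) := inferInstanceAs (Algebra k (RingQuot (Rel k n)))

/-- The polynomial generator `x_{i+1}` (0-based `x_i`). -/
def X (n i : ℕ) : H k n := RingQuot.mkAlgHom k (Rel k n) (FreeAlgebra.ι k (.inl i))

/-- The nil Hecke generator `τ_{i+1}` (0-based `τ_i`). -/
def T (n i : ℕ) : H k n := RingQuot.mkAlgHom k (Rel k n) (FreeAlgebra.ι k (.inr i))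

/-- The element `s_i = τ_i (x_i - x_{i+1}) - 1`. -/
def s (n i : ℕ) : H k n := T k n i * (X k n i - X k n (i+1)) - 1

/-- The ascending product `τ_a τ_{a+1} ⋯ τ_{b-1}` (0-based). -/
def chain (n a b : ℕ) : H k n := (List.map (T k n) (List.range' a (b - a))).prod

theorem X_kill (n i : ℕ) (h : n ≤ i) : X k n i = 0 := by
  have h := RingQuot.mkAlgHom_rel k (Rel.xkill (k := k) (n := n) i h)
  simp only [X, map_zero] at h ⊢
  exact h

theorem T_kill (n i : ℕ) (h : n ≤ i + 1) : T k n i = 0 := by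
  have h := RingQuot.mkAlgHom_rel k (Rel.tkill (k := k) (n := n) i h)
  simp only [T, map_zero] at h ⊢
  exact h

theorem T_sq (n i : ℕ) : T k n i * T k n i = 0 := by
  have h := RingQuot.mkAlgHom_rel k (Rel.tsq (k := k) (n := n) i)
  simp only [T, map_mul, map_zero] at h ⊢
  exact h

theorem T_braid (n i : ℕ) :
    T k n i * T k n (i+1) * T k n i = T k n (i+1) * T k n i * T k n (i+1) := by
  have h := RingQuot.mkAlgHom_rel k (Rel.braid (k := k) (n := n) i)
  simp only [T, map_mul] at h ⊢
  exact h

theorem T_comm (n i j : ℕ) (h : i + 1 < j) : T k n i * T k n j = T k n j * T k n i := by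
  have h := RingQuot.mkAlgHom_rel k (Rel.tcomm (k := k) (n := n) i j h)
  simp only [T, map_mul] at h ⊢
  exact h

theorem X_comm (n i j : ℕ) : X k n i * X k n j = X k n j * X k n i := by
  have h := RingQuot.mkAlgHom_rel k (Rel.xcomm (k := k) (n := n) i j)
  simp only [X, map_mul] at h ⊢
  exact h

theorem TX_comm (n i j : ℕ) (h1 : j ≠ i) (h2 : j ≠ i + 1) :
    T k n i * X k n j = X k n j * T k n i := by
  have h := RingQuot.mkAlgHom_rel k (Rel.txcomm (k := k) (n := n) i j h1 h2)
  simp only [T, X, map_mul] at h ⊢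
  exact h

theorem TX (n i : ℕ) (h : i + 1 < n) :
    T k n i * X k n i - X k n (i+1) * T k n i = 1 := by
  have h := RingQuot.mkAlgHom_rel k (Rel.tx (k := k) (n := n) i h)
  simp only [T, X, map_mul, map_sub, map_one] at h ⊢
  exact h

theorem XT (n i : ℕ) (h : i + 1 < n) :
    X k n i * T k n i - T k n i * X k n (i+1) = 1 := by
  have h := RingQuot.mkAlgHom_rel k (Rel.xt (k := k) (n := n) i h)
  simp only [T, X, map_mul, map_sub, map_one] at h ⊢
  exact h

/-- The inclusion `H m → H n` for `m ≤ n`. -/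
def incl (m n : ℕ) (h : m ≤ n) : H k m →ₐ[k] H k n :=
  RingQuot.liftAlgHom k ⟨FreeAlgebra.lift k (fun g =>
    match g with
    | .inl i => if i < m then X k n i else 0
    | .inr i => if i + 1 < m then T k n i else 0), by
      rintro a b r
      induction r with
      | xkill i h' => simp only [FreeAlgebra.lift_ι_apply, map_zero]; rw [if_neg (by omega)]
      | tkill i h' => simp only [FreeAlgebra.lift_ι_apply, map_zero]; rw [if_neg (by omega)]
      | tsq i =>
          simp only [map_mul, FreeAlgebra.lift_ι_apply, map_zero]
          split_ifs <;> simp [T_sq]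
      | braid i =>
          simp only [map_mul, FreeAlgebra.lift_ι_apply]
          split_ifs <;> simp [T_braid]
      | tcomm i j h' =>
          simp only [map_mul, FreeAlgebra.lift_ι_apply]
          split_ifs <;> simp [T_comm k n i j h']
      | xcomm i j =>
          simp only [map_mul, FreeAlgebra.lift_ι_apply]
          split_ifs <;> simp [X_comm k n i j]
      | txcomm i j h1 h2 =>
          simp only [map_mul, FreeAlgebra.lift_ι_apply]
          split_ifs <;> simp [TX_comm k n i j h1 h2]
      | tx i h' =>
          simp only [map_sub, map_mul, map_one, FreeAlgebra.lift_ι_apply]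
          rw [if_pos h', if_pos (by omega : i < m), if_pos (by omega : i + 1 < m)]
          exact TX k n i (by omega)
      | xt i h' =>
          simp only [map_sub, map_mul, map_one, FreeAlgebra.lift_ι_apply]
          rw [if_pos (by omega : i < m), if_pos h', if_pos h']
          exact XT k n i (by omega)⟩

/-- The shift embedding `H m → H n` (sending `x_i ↦ x_{i+1}`, `τ_i ↦ τ_{i+1}`). -/
def shj (m n : ℕ) (h : m + 1 ≤ n ∨ m = 0) : H k m →ₐ[k] H k n :=
  RingQuot.liftAlgHom k ⟨FreeAlgebra.lift k (fun g =>
    match g with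
    | .inl i => if i < m then X k n (i+1) else 0
    | .inr i => if i + 1 < m then T k n (i+1) else 0), by
      rintro a b r
      induction r with
      | xkill i h' => simp only [FreeAlgebra.lift_ι_apply, map_zero]; rw [if_neg (by omega)]
      | tkill i h' => simp only [FreeAlgebra.lift_ι_apply, map_zero]; rw [if_neg (by omega)]
      | tsq i =>
          simp only [map_mul, FreeAlgebra.lift_ι_apply, map_zero]
          split_ifs <;> simp [T_sq]
      | braid i =>
          simp only [map_mul, FreeAlgebra.lift_ι_apply]
          split_ifs <;> simp [T_braid]
      | tcomm i j h' =>
          simp only [map_mul, FreeAlgebra.lift_ι_apply]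
          split_ifs <;> simp [T_comm k n (i+1) (j+1) (by omega)]
      | xcomm i j =>
          simp only [map_mul, FreeAlgebra.lift_ι_apply]
          split_ifs <;> simp [X_comm k n (i+1) (j+1)]
      | txcomm i j h1 h2 =>
          simp only [map_mul, FreeAlgebra.lift_ι_apply]
          split_ifs <;> simp [TX_comm k n (i+1) (j+1) (by omega) (by omega)]
      | tx i h' =>
          simp only [map_sub, map_mul, map_one, FreeAlgebra.lift_ι_apply]
          rw [if_pos h', if_pos (by omega : i < m), if_pos (by omega : i + 1 < m)]
          exact TX k n (i+1) (by omega)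
      | xt i h' =>
          simp only [map_sub, map_mul, map_one, FreeAlgebra.lift_ι_apply]
          rw [if_pos (by omega : i < m), if_pos h', if_pos h']
          exact XT k n (i+1) (by omega)⟩

end NilHecke

namespace NilHecke

variable (k : Type) [Field k]

/-- `ι_0 : H_{n−1}[y] → H_n`, sending `x_i ↦ x_i`, `τ_i ↦ τ_i`, `y ↦ x_n`
(0-based: `y ↦ x_{n-1}`, the last variable). -/
def iota0 (n : ℕ) (p : Polynomial (H k (n-1))) : H k n :=
  p.sum fun i a => incl k (n-1) n (Nat.sub_le n 1) a * X k n (n-1) ^ i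

/-- `ι_1 : H_{n−1}[y] → H_n`, sending `x_i ↦ x_{i+1}`, `τ_i ↦ τ_{i+1}`, `y ↦ x_1`
(0-based: `y ↦ x_0`, the first variable). -/
def iota1 (n : ℕ) (p : Polynomial (H k (n-1))) : H k n :=
  p.sum fun i a => shj k (n-1) n (by omega) a * X k n 0 ^ i

/-- The balancing submodule of `H_n ⊗_k H_n` whose quotient is the balanced tensor
product `H_n ι_0 ⊗_{H_{n−1}[y]} ι_1 H_n`. -/
noncomputable def bal (n : ℕ) : Submodule k (H k n ⊗[k] H k n) :=
  Submodule.span k {z | ∃ (a b : H k n) (p : Polynomial (H k (n-1))),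
    z = (a * iota0 k n p) ⊗ₜ[k] b - a ⊗ₜ[k] (iota1 k n p * b)}

/-- A representative in `H_n ⊗_k H_n` of the element
`Δ_n = Σ_{r=1}^{n} (τ_r ⋯ τ_{n−1}) ⊗ (τ_1 ⋯ τ_{r−1})` (1-based indices). -/
noncomputable def deltaT (n : ℕ) : H k n ⊗[k] H k n :=
  ∑ r ∈ Finset.range n, chain k n r (n-1) ⊗ₜ[k] chain k n 0 r

/-- A representative of `p · Δ_n` for `p ∈ H_n[y]` acting through the left
`H_n[y]`-module structure of `H_n ι_0 ⊗_{H_{n−1}[y]} ι_1 H_n` (on the left factor,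
`y` acting via `x_n`, i.e. a coefficient `c·y^i` sends `m ⊗ h` to `c·m·x_n^i ⊗ h`). -/
noncomputable def actDelta (n : ℕ) (p : Polynomial (H k n)) : H k n ⊗[k] H k n :=
  ∑ r ∈ Finset.range n,
    (p.sum fun i c => c * chain k n r (n-1) * X k n (n-1) ^ i) ⊗ₜ[k] chain k n 0 r

end NilHecke

namespace NilHecke

section Aux

variable (k : Type) [Field k] (n : ℕ)

/-- The operator `D_j(h) = x_j h - h x_{n-1}`. -/
def DD (j : ℕ) (h : H k n) : H k n := X k n j * h - h * X k n (n-1)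

theorem X_comm' (i j : ℕ) (K : H k n) :
    X k n i * (X k n j * K) = X k n j * (X k n i * K) := by
  rw [← mul_assoc, X_comm, mul_assoc]

theorem TX_comm' (i j : ℕ) (h1 : j ≠ i) (h2 : j ≠ i + 1) (K : H k n) :
    X k n j * (T k n i * K) = T k n i * (X k n j * K) := by
  rw [← mul_assoc, ← TX_comm k n i j h1 h2, mul_assoc]

theorem TX_eq (i : ℕ) (h : i + 1 < n) :
    X k n (i+1) * T k n i = T k n i * X k n i - 1 := by
  have h' := TX k n i h
  rw [← h']; abel

theorem XT_eq (i : ℕ) (h : i + 1 < n) :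
    X k n i * T k n i = T k n i * X k n (i+1) + 1 := by
  have h' := XT k n i h
  rw [← h']; abel

theorem TX' (i : ℕ) (h : i + 1 < n) (K : H k n) :
    X k n (i+1) * (T k n i * K) = T k n i * (X k n i * K) - K := by
  rw [← mul_assoc, TX_eq k n i h, sub_mul, one_mul, mul_assoc]

theorem XT' (i : ℕ) (h : i + 1 < n) (K : H k n) :
    X k n i * (T k n i * K) = T k n i * (X k n (i+1) * K) + K := by
  rw [← mul_assoc, XT_eq k n i h, add_mul, one_mul, mul_assoc]

theorem DD_zero (j : ℕ) : DD k n j 0 = 0 := by simp [DD]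

theorem DD_sub (j : ℕ) (a b : H k n) : DD k n j (a - b) = DD k n j a - DD k n j b := by
  simp only [DD, mul_sub, sub_mul]; abel

theorem DD_comm (i j : ℕ) (h : H k n) :
    DD k n i (DD k n j h) = DD k n j (DD k n i h) := by
  simp only [DD, mul_sub, sub_mul, mul_assoc]
  rw [X_comm' k n i j h]
  abel

theorem DD_pull (r j : ℕ) (h1 : j ≠ r) (h2 : j ≠ r + 1) (b : H k n) :
    DD k n j (T k n r * b) = T k n r * DD k n j b := by
  simp only [DD]
  rw [TX_comm' k n r j h1 h2, mul_assoc, ← mul_sub]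

theorem foldr_pull (r : ℕ) (l : List ℕ) (hl : ∀ j ∈ l, j ≠ r ∧ j ≠ r + 1) (b : H k n) :
    l.foldr (DD k n) (T k n r * b) = T k n r * l.foldr (DD k n) b := by
  induction l with
  | nil => rfl
  | cons a l ih =>
      simp only [List.foldr_cons]
      rw [ih (fun j hj => hl j (List.mem_cons_of_mem a hj)),
        DD_pull k n r a (hl a List.mem_cons_self).1 (hl a List.mem_cons_self).2]

theorem foldr_DD_zero (l : List ℕ) : l.foldr (DD k n) 0 = 0 := by
  induction l with
  | nil => rfl
  | cons a l ih => simp only [List.foldr_cons, ih, DD_zero]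

theorem foldr_DD_perm {l₁ l₂ : List ℕ} (p : l₁.Perm l₂) (b : H k n) :
    l₁.foldr (DD k n) b = l₂.foldr (DD k n) b := by
  induction p generalizing b with
  | nil => rfl
  | cons x _ ih => simp only [List.foldr_cons]; rw [ih]
  | swap x y l => simp only [List.foldr_cons]; exact DD_comm k n y x _
  | trans _ _ ih1 ih2 => rw [ih1, ih2]

theorem chain_nil (a b : ℕ) (h : b ≤ a) : chain k n a b = 1 := by
  unfold chain
  rw [Nat.sub_eq_zero_of_le h, List.range'_zero, List.map_nil, List.prod_nil]

theorem chain_cons (a b : ℕ) (h : a < b) :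
    chain k n a b = T k n a * chain k n (a+1) b := by
  unfold chain
  rw [show b - a = (b - (a+1)) + 1 by omega, List.range'_succ, List.map_cons, List.prod_cons]

/-- `Ψ(r) = D_{r+1}(D_{r+2}(⋯ D_{n-1}(τ_r ⋯ τ_{n-2})))`. -/
def Psi (r : ℕ) : H k n :=
  (List.range' (r+1) (n-1-r)).foldr (DD k n) (chain k n r (n-1))

/-- `Φ(r) = D_r(Ψ(r))`. -/
def Phi (r : ℕ) : H k n := DD k n r (Psi k n r)

theorem Psi_last (r : ℕ) (h : r + 1 = n) : Psi k n r = 1 := by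
  unfold Psi
  rw [show n - 1 - r = 0 by omega, List.range'_zero, List.foldr_nil]
  exact chain_nil k n r (n-1) (by omega)

theorem Psi_rec (r : ℕ) (h : r + 2 ≤ n) :
    Psi k n r = T k n r * DD k n r (Psi k n (r+1)) - Psi k n (r+1) := by
  have e2 : Psi k n r = DD k n (r+1) (T k n r * Psi k n (r+1)) := by
    unfold Psi
    rw [show n - 1 - r = (n - 1 - (r+1)) + 1 by omega, List.range'_succ, List.foldr_cons,
      chain_cons k n r (n-1) (by omega),
      foldr_pull k n r _ (fun j hj => by
        obtain ⟨i, _, rfl⟩ := List.mem_range'.mp hj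
        constructor <;> omega) _]
  rw [e2]
  unfold DD
  rw [TX' k n r (by omega), mul_assoc, mul_sub]
  abel

theorem Phi_zero : ∀ d r, r + d + 1 = n → Phi k n r = 0 := by
  intro d
  induction d with
  | zero =>
      intro r h
      unfold Phi
      rw [Psi_last k n r (by omega)]
      unfold DD
      rw [mul_one, one_mul, show n - 1 = r by omega, sub_self]
  | succ d ih =>
      intro r h
      have hG : ∀ G : H k n, DD k n r (T k n r * G) = T k n r * DD k n (r+1) G + G := by
        intro G
        unfold DD
        rw [XT' k n r (by omega), mul_assoc, mul_sub]
        abel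
      have hK : DD k n (r+1) (Psi k n (r+1)) = 0 := ih (r+1) (by omega)
      unfold Phi
      rw [Psi_rec k n r (by omega), DD_sub, hG (DD k n r (Psi k n (r+1))), DD_comm, hK,
        DD_zero, mul_zero]
      abel

theorem s_T (r : ℕ) (h : r + 1 < n) : s k n r * T k n r = T k n r := by
  unfold s
  rw [sub_mul, one_mul, mul_assoc, sub_mul, XT_eq k n r h, TX_eq k n r h]
  simp only [mul_sub, mul_add, mul_one]
  rw [← mul_assoc, T_sq, zero_mul, ← mul_assoc, T_sq, zero_mul]
  abel

theorem s_Psi (r : ℕ) (h : r + 2 ≤ n) :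
    s k n r * Psi k n r = Psi k n (r+1) := by
  have hphi : DD k n (r+1) (Psi k n (r+1)) = 0 := Phi_zero k n (n-r-2) (r+1) (by omega)
  rw [Psi_rec k n r h]
  set K := Psi k n (r+1) with hK
  rw [mul_sub, ← mul_assoc, s_T k n r (by omega)]
  unfold s
  rw [sub_mul, one_mul, mul_assoc]
  have hDD : DD k n r K - (X k n r - X k n (r+1)) * K = DD k n (r+1) K := by
    unfold DD
    rw [sub_mul]
    abel
  have key : T k n r * DD k n r K - T k n r * ((X k n r - X k n (r+1)) * K) = 0 := by
    rw [← mul_sub, hDD, hphi, mul_zero]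
  rw [sub_eq_zero.mp key]
  abel

theorem Sprod : ∀ d r, r + d + 1 = n →
    ((List.range' r d).reverse.map (s k n)).prod * Psi k n r = 1 := by
  intro d
  induction d with
  | zero =>
      intro r h
      rw [List.range'_zero, List.reverse_nil, List.map_nil, List.prod_nil, one_mul]
      exact Psi_last k n r (by omega)
  | succ d ih =>
      intro r h
      rw [List.range'_succ, List.reverse_cons, List.map_append, List.prod_append]
      simp only [List.map_cons, List.map_nil, List.prod_cons, List.prod_nil, mul_one]
      rw [mul_assoc, s_Psi k n r (by omega), ih (r+1) (by omega)]

/-- Evaluation of a polynomial through the left `H_n[y]`-action on a basis element. -/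
def ev (h : H k n) (p : Polynomial (H k n)) : H k n :=
  p.sum fun i c => c * h * X k n (n-1) ^ i

theorem ev_monomial (h : H k n) (i : ℕ) (a : H k n) :
    ev k n h (Polynomial.monomial i a) = a * h * X k n (n-1) ^ i :=
  Polynomial.sum_monomial_index a _ (by simp)

theorem ev_add (h : H k n) (p q : Polynomial (H k n)) :
    ev k n h (p + q) = ev k n h p + ev k n h q :=
  Polynomial.sum_add_index p q _ (fun i => by simp)
    (fun a b c => by rw [add_mul, add_mul])

theorem ev_neg (h : H k n) (p : Polynomial (H k n)) : ev k n h (-p) = - ev k n h p := by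
  induction p using Polynomial.induction_on' with
  | add p q hp hq => rw [neg_add, ev_add, hp, hq, ev_add, neg_add]
  | monomial i a =>
      rw [← map_neg (Polynomial.monomial i) a, ev_monomial, ev_monomial, neg_mul, neg_mul]

theorem ev_sub (h : H k n) (p q : Polynomial (H k n)) :
    ev k n h (p - q) = ev k n h p - ev k n h q := by
  rw [sub_eq_add_neg, ev_add, ev_neg, ← sub_eq_add_neg]

theorem ev_C_mul (h : H k n) (c : H k n) (p : Polynomial (H k n)) :
    ev k n h (Polynomial.C c * p) = c * ev k n h p := by
  induction p using Polynomial.induction_on' with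
  | add p q hp hq => rw [mul_add, ev_add, hp, hq, ev_add, mul_add]
  | monomial i a => simp [Polynomial.C_mul_monomial, ev_monomial, mul_assoc]

theorem ev_X_mul (h : H k n) (p : Polynomial (H k n)) :
    ev k n h (Polynomial.X * p) = ev k n h p * X k n (n-1) := by
  induction p using Polynomial.induction_on' with
  | add p q hp hq => rw [mul_add, ev_add, hp, hq, ev_add, add_mul]
  | monomial i a => simp [Polynomial.X_mul_monomial, ev_monomial, pow_succ, mul_assoc]

theorem ev_one (h : H k n) : ev k n h 1 = h := by
  rw [← Polynomial.monomial_zero_one, ev_monomial]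
  simp

theorem ev_prod (h : H k n) (l : List ℕ) :
    ev k n h ((l.map (fun j => Polynomial.C (X k n j) - Polynomial.X)).prod)
      = l.foldr (DD k n) h := by
  induction l with
  | nil => simpa using ev_one k n h
  | cons a l ih =>
      rw [List.map_cons, List.prod_cons, sub_mul, ev_sub, ev_C_mul, ev_X_mul, ih,
        List.foldr_cons]
      rfl

theorem actDelta_eq (hn : 1 ≤ n) :
    actDelta k n
        (Polynomial.C (((List.range (n-1)).reverse.map (s k n)).prod) *
          (((List.range' 1 (n-1)).reverse.map
            (fun j => Polynomial.C (X k n j) - Polynomial.X)).prod))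
      = (1 : H k n) ⊗ₜ[k] (1 : H k n) := by
  set S := ((List.range (n-1)).reverse.map (s k n)).prod with hS
  set Q := (((List.range' 1 (n-1)).reverse.map
    (fun j => Polynomial.C (X k n j) - Polynomial.X)).prod) with hQ
  have hrw : actDelta k n (Polynomial.C S * Q)
      = ∑ r ∈ Finset.range n,
          ev k n (chain k n r (n-1)) (Polynomial.C S * Q) ⊗ₜ[k] chain k n 0 r := rfl
  have hterm : ∀ r, ev k n (chain k n r (n-1)) (Polynomial.C S * Q)
      = S * (List.range' 1 (n-1)).foldr (DD k n) (chain k n r (n-1)) := by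
    intro r
    rw [hQ, ev_C_mul, ev_prod, foldr_DD_perm k n (List.reverse_perm _) _]
  have hzero : ∀ b ∈ Finset.range n, b ≠ 0 →
      (ev k n (chain k n b (n-1)) (Polynomial.C S * Q) ⊗ₜ[k] chain k n 0 b)
        = (0 : H k n ⊗[k] H k n) := by
    intro r hr hr0
    rw [hterm r]
    have hr1 : 1 ≤ r := Nat.one_le_iff_ne_zero.mpr hr0
    have hr2 : r < n := Finset.mem_range.mp hr
    have hsplit : List.range' 1 (n-1) = List.range' 1 (r-1) ++ List.range' r (n-r) := by
      have h := List.range'_append_1 (s := 1) (m := r-1) (n := n-r)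
      rw [show 1 + (r-1) = r by omega] at h
      rw [h, show (r-1) + (n-r) = n - 1 by omega]
    rw [hsplit, List.foldr_append]
    have hphi : (List.range' r (n-r)).foldr (DD k n) (chain k n r (n-1)) = 0 := by
      rw [show n - r = (n-1-r) + 1 by omega, List.range'_succ, List.foldr_cons]
      exact Phi_zero k n (n-1-r) r (by omega)
    rw [hphi, foldr_DD_zero, mul_zero, TensorProduct.zero_tmul]
  rw [hrw, Finset.sum_eq_single_of_mem 0 (Finset.mem_range.mpr hn) hzero, hterm 0]
  have h0 : (List.range' 1 (n-1)).foldr (DD k n) (chain k n 0 (n-1)) = Psi k n 0 := by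
    unfold Psi
    norm_num
  rw [h0, chain_nil k n 0 0 le_rfl]
  have hs : S * Psi k n 0 = 1 := by
    have h1 := Sprod k n (n-1) 0 (by omega)
    rwa [← List.range_eq_range'] at h1
  rw [hs]

end Aux

/-- `s_{n−1} s_{n−2} ⋯ s_1 · (x_n − y)(x_{n−1} − y) ⋯ (x_2 − y) · Δ_n
= 1 ⊗ 1` in `H_n ι_0 ⊗_{H_{n−1}[y]} ι_1 H_n` (realized as the quotient of `H_n ⊗_k H_n`
by the balancing submodule `bal`; the displayed element of `H_n[y]` acts through the left
`H_n[y]`-module structure, implemented by `actDelta`). -/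
theorem s_x_delta_eq_one (k : Type) [Field k] (n : ℕ) (hn : 1 ≤ n) :
    actDelta k n
        (Polynomial.C (((List.range (n-1)).reverse.map (s k n)).prod) *
          (((List.range' 1 (n-1)).reverse.map
            (fun j => Polynomial.C (X k n j) - Polynomial.X)).prod))
      - (1 : H k n) ⊗ₜ[k] (1 : H k n) ∈ bal k n := by
  rw [actDelta_eq k n hn, sub_self]
  exact Submodule.zero_mem _

end NilHecke
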